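/- arXiv:1612.02526 — 3 statements merged into one kernel-verified Lean document; each statement's English description precedes it below -/
import Mathlib

section
/- Consider an HMM with n hidden states whose hidden state at time 0 is drawn from a distribution π, and denote the observation at time s by x_s. Let OPT_s denote the conditional distribution of x_s given observations x_0,…,x_{s−1} and knowledge of the true hidden state h_0 at time 0, and let M_s denote the conditional distribution of x_s given only x_0,…,x_{s−1} (with h_0 ∼ π). Fix c ≥ 1 and ε ≥ 1/(log n)^{1/4} with ε > 1/n, and set ℓ = c·log n / ε². If the true hidden state h_0 satisfies π(h_0) ≥ 1/n^c, then E[ Σ_{s=0}^{ℓ−1} ‖OPT_s − M_s‖₁ ] ≤ 4 ε ℓ, where the expectation is over the randomness of the outputs x_0,…,x_{ℓ−1} (conditioned on the true initial state being h_0). -/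
open Finset Real
open scoped Classical

/-- Probability of an event under a weight function on a finite sample space. -/
noncomputable def pr {Ω : Type*} [Fintype Ω] (p : Ω → ℝ) (E : Ω → Prop) : ℝ :=
  ∑ ω, if E ω then p ω else 0

/-- Conditional distribution of a random variable `X` given an event `E`. -/
noncomputable def condDist {Ω A : Type*} [Fintype Ω] (p : Ω → ℝ)
    (X : Ω → A) (E : Ω → Prop) : A → ℝ :=
  fun a => pr p (fun ω => X ω = a ∧ E ω) / pr p E

/-- ℓ1 distance between two distributions on a finite alphabet. -/
noncomputable def l1Dist {A : Type*} [Fintype A] (f g : A → ℝ) : ℝ :=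
  ∑ a, |f a - g a|

/-- A Hidden Markov Model with hidden state space `S` and output alphabet `A`. -/
structure HMM (S A : Type*) [Fintype S] [Fintype A] where
  init : S → ℝ
  init_nonneg : ∀ s, 0 ≤ init s
  init_sum : ∑ s, init s = 1
  trans : S → S → ℝ
  trans_nonneg : ∀ s s', 0 ≤ trans s s'
  trans_sum : ∀ s, ∑ s', trans s s' = 1
  emit : S → A → ℝ
  emit_nonneg : ∀ s a, 0 ≤ emit s a
  emit_sum : ∀ s, ∑ a, emit s a = 1

/-- The joint probability the HMM assigns to a trajectory of hidden states and outputs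
at times `0, 1, …, T`. -/
noncomputable def hmmWeight {S A : Type*} [Fintype S] [Fintype A] (M : HMM S A) (T : ℕ) :
    ((Fin (T + 1) → S) × (Fin (T + 1) → A)) → ℝ :=
  fun ω => M.init (ω.1 0) * (∏ i : Fin T, M.trans (ω.1 i.castSucc) (ω.1 i.succ)) *
    ∏ i : Fin (T + 1), M.emit (ω.1 i) (ω.2 i)

/-- The output `x_t` of an HMM trajectory with horizon `T` (for `t ≤ T`). -/
def obs {S A : Type*} (T : ℕ) (t : ℕ) (ω : (Fin (T + 1) → S) × (Fin (T + 1) → A)) : A :=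
  ω.2 ⟨t % (T + 1), Nat.mod_lt _ (Nat.succ_pos T)⟩

/-- The hidden state `h_t` of an HMM trajectory with horizon `T` (for `t ≤ T`). -/
def hid {S A : Type*} (T : ℕ) (t : ℕ) (ω : (Fin (T + 1) → S) × (Fin (T + 1) → A)) : S :=
  ω.1 ⟨t % (T + 1), Nat.mod_lt _ (Nat.succ_pos T)⟩

section PrLemmas

variable {Ω A B : Type*} [Fintype Ω] [Fintype A] [Fintype B]

lemma pr_nonneg {p : Ω → ℝ} (hp : ∀ ω, 0 ≤ p ω) (E : Ω → Prop) : 0 ≤ pr p E :=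
  Finset.sum_nonneg fun ω _ => by by_cases h : E ω <;> simp [pr, h, hp ω]

lemma pr_congr {p : Ω → ℝ} {E F : Ω → Prop} (h : ∀ ω, E ω ↔ F ω) : pr p E = pr p F :=
  Finset.sum_congr rfl fun ω _ => by simp only [h ω]

lemma pr_mono {p : Ω → ℝ} (hp : ∀ ω, 0 ≤ p ω) {E F : Ω → Prop} (h : ∀ ω, E ω → F ω) :
    pr p E ≤ pr p F :=
  Finset.sum_le_sum fun ω _ => by
    by_cases hE : E ω
    · simp only [if_pos hE, if_pos (h ω hE)]; exact le_rfl
    · simp only [if_neg hE]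
      split_ifs with hF
      · exact hp ω
      · exact le_rfl

lemma single_le_pr {p : Ω → ℝ} (hp : ∀ ω, 0 ≤ p ω) {E : Ω → Prop} {ω0 : Ω} (h : E ω0) :
    p ω0 ≤ pr p E := by
  have h2 := Finset.single_le_sum (f := fun ω => if E ω then p ω else 0)
    (fun ω _ => by split_ifs; exacts [hp ω, le_rfl]) (Finset.mem_univ ω0)
  simpa [if_pos h, pr] using h2

lemma sum_pr_eq (p : Ω → ℝ) (X : Ω → A) (E : Ω → Prop) :
    ∑ a, pr p (fun ω => X ω = a ∧ E ω) = pr p E := by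
  unfold pr
  rw [Finset.sum_comm]
  refine Finset.sum_congr rfl fun ω _ => ?_
  by_cases hE : E ω <;> simp [hE]

lemma condDist_nonneg {p : Ω → ℝ} (hp : ∀ ω, 0 ≤ p ω) (X : Ω → A) (E : Ω → Prop) (a : A) :
    0 ≤ condDist p X E a :=
  div_nonneg (pr_nonneg hp _) (pr_nonneg hp _)

lemma condDist_sum_one {p : Ω → ℝ} (X : Ω → A) (E : Ω → Prop) (h : pr p E ≠ 0) :
    ∑ a, condDist p X E a = 1 := by
  unfold condDist
  rw [← Finset.sum_div, sum_pr_eq, div_self h]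

lemma condDist_congr {p : Ω → ℝ} (X : Ω → A) {E F : Ω → Prop} (h : ∀ ω, E ω ↔ F ω) :
    condDist p X E = condDist p X F := by
  funext a
  unfold condDist
  rw [pr_congr h, pr_congr (fun ω => and_congr_right fun _ => h ω)]

end PrLemmas

section Pinsker

lemma phi_ineq {x y : ℝ} (hx : 0 ≤ x) (hy : 0 ≤ y) (hac : y = 0 → x = 0) :
    (Real.sqrt x - Real.sqrt y) ^ 2 ≤ x * Real.log (x / y) - x + y := by
  rcases eq_or_lt_of_le hy with hy0 | hy0
  · have hx0 : x = 0 := hac hy0.symm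
    simp [← hy0, hx0]
  rcases eq_or_lt_of_le hx with hx0 | hx0
  · rw [← hx0]
    rw [sub_sq, Real.sqrt_zero, Real.sq_sqrt hy]
    ring_nf
    simp
  · have ht : 0 < Real.sqrt (y / x) := Real.sqrt_pos.2 (div_pos hy0 hx0)
    have h1 : Real.log (Real.sqrt (y / x)) ≤ Real.sqrt (y / x) - 1 :=
      Real.log_le_sub_one_of_pos ht
    have h2 : Real.log (Real.sqrt (y / x)) = (Real.log y - Real.log x) / 2 := by
      rw [Real.log_sqrt (div_pos hy0 hx0).le, Real.log_div (ne_of_gt hy0) (ne_of_gt hx0)]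
    have h3 : x * Real.sqrt (y / x) = Real.sqrt (x * y) := by
      rw [show x * y = x ^ 2 * (y / x) by field_simp, Real.sqrt_mul (sq_nonneg x),
        Real.sqrt_sq hx]
    have h4 : Real.log (x / y) = Real.log x - Real.log y :=
      Real.log_div (ne_of_gt hx0) (ne_of_gt hy0)
    have h5 : x * Real.log (x / y) ≥ 2 * x - 2 * Real.sqrt (x * y) := by
      rw [h4, ← h3]
      have := mul_le_mul_of_nonneg_left (h2 ▸ h1) hx -- careful
      nlinarith [hx0]
    have h6 : (Real.sqrt x - Real.sqrt y) ^ 2 = x + y - 2 * Real.sqrt (x * y) := by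
      rw [sub_sq, Real.sq_sqrt hx, Real.sq_sqrt hy, Real.sqrt_mul hx]
      ring
    linarith

lemma pinsker_lite {A : Type*} [Fintype A] (f g : A → ℝ)
    (hf : ∀ a, 0 ≤ f a) (hg : ∀ a, 0 ≤ g a)
    (hf1 : ∑ a, f a = 1) (hg1 : ∑ a, g a = 1)
    (hac : ∀ a, g a = 0 → f a = 0) :
    0 ≤ ∑ a, f a * Real.log (f a / g a) ∧
    ∑ a, |f a - g a| ≤ 2 * Real.sqrt (∑ a, f a * Real.log (f a / g a)) := by
  set KL := ∑ a, f a * Real.log (f a / g a) with hKLdef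
  have hHKL : ∑ a, (Real.sqrt (f a) - Real.sqrt (g a)) ^ 2 ≤ KL := by
    have e1 : KL = ∑ a, (f a * Real.log (f a / g a) - f a + g a) := by
      rw [Finset.sum_add_distrib, Finset.sum_sub_distrib, hf1, hg1]
      ring
    rw [e1]
    exact Finset.sum_le_sum fun a _ => phi_ineq (hf a) (hg a) (hac a)
  have hHnn : 0 ≤ ∑ a, (Real.sqrt (f a) - Real.sqrt (g a)) ^ 2 :=
    Finset.sum_nonneg fun a _ => sq_nonneg _
  refine ⟨le_trans hHnn hHKL, ?_⟩
  have habs : ∀ a : A, |f a - g a| = |Real.sqrt (f a) - Real.sqrt (g a)| *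
      (Real.sqrt (f a) + Real.sqrt (g a)) := by
    intro a
    have : f a - g a = (Real.sqrt (f a) - Real.sqrt (g a)) * (Real.sqrt (f a) + Real.sqrt (g a)) := by
      have := Real.sq_sqrt (hf a); have := Real.sq_sqrt (hg a); nlinarith
    rw [this, abs_mul, abs_of_nonneg (show (0:ℝ) ≤ Real.sqrt (f a) + Real.sqrt (g a) by positivity)]
  have hcs := Finset.sum_mul_sq_le_sq_mul_sq Finset.univ
    (fun a => |Real.sqrt (f a) - Real.sqrt (g a)|) (fun a => Real.sqrt (f a) + Real.sqrt (g a))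
  have hsq4 : ∑ a, (Real.sqrt (f a) + Real.sqrt (g a)) ^ 2 ≤ 4 := by
    have : ∀ a : A, (Real.sqrt (f a) + Real.sqrt (g a)) ^ 2 ≤ 2 * (f a + g a) := by
      intro a
      have h1 := Real.sq_sqrt (hf a); have h2 := Real.sq_sqrt (hg a)
      nlinarith [sq_nonneg (Real.sqrt (f a) - Real.sqrt (g a))]
    calc ∑ a, (Real.sqrt (f a) + Real.sqrt (g a)) ^ 2 ≤ ∑ a, 2 * (f a + g a) :=
          Finset.sum_le_sum fun a _ => this a
      _ = 4 := by rw [← Finset.mul_sum, Finset.sum_add_distrib, hf1, hg1]; norm_num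
  have hl1sq : (∑ a, |f a - g a|) ^ 2 ≤ 4 * KL := by
    calc (∑ a, |f a - g a|) ^ 2
        = (∑ a, |Real.sqrt (f a) - Real.sqrt (g a)| * (Real.sqrt (f a) + Real.sqrt (g a))) ^ 2 := by
          congr 1; exact Finset.sum_congr rfl fun a _ => habs a
      _ ≤ (∑ a, |Real.sqrt (f a) - Real.sqrt (g a)| ^ 2) *
          (∑ a, (Real.sqrt (f a) + Real.sqrt (g a)) ^ 2) := hcs
      _ = (∑ a, (Real.sqrt (f a) - Real.sqrt (g a)) ^ 2) *
          (∑ a, (Real.sqrt (f a) + Real.sqrt (g a)) ^ 2) := by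
          congr 1; exact Finset.sum_congr rfl fun a _ => sq_abs _
      _ ≤ KL * 4 := by
          apply mul_le_mul hHKL hsq4 (Finset.sum_nonneg fun a _ => sq_nonneg _)
            (le_trans hHnn hHKL)
      _ = 4 * KL := by ring
  have hl1nn : 0 ≤ ∑ a, |f a - g a| := Finset.sum_nonneg fun a _ => abs_nonneg _
  calc ∑ a, |f a - g a| = Real.sqrt ((∑ a, |f a - g a|) ^ 2) := (Real.sqrt_sq hl1nn).symm
    _ ≤ Real.sqrt (4 * KL) := Real.sqrt_le_sqrt hl1sq
    _ = 2 * Real.sqrt KL := by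
        rw [show (4:ℝ) * KL = 2 ^ 2 * KL by ring, Real.sqrt_mul (by positivity) KL,
          Real.sqrt_sq (by norm_num : (0:ℝ) ≤ 2)]

lemma sum_sqrt_le {ι : Type*} (t : Finset ι) (q r : ι → ℝ) (hq : ∀ i ∈ t, 0 ≤ q i)
    (hr : ∀ i ∈ t, q i ≠ 0 → 0 ≤ r i) :
    ∑ i ∈ t, q i * Real.sqrt (r i) ≤ Real.sqrt (∑ i ∈ t, q i) * Real.sqrt (∑ i ∈ t, q i * r i) := by
  have key : ∀ i ∈ t, q i * Real.sqrt (r i) = Real.sqrt (q i) * Real.sqrt (q i * r i) := by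
    intro i hi
    by_cases h : q i = 0
    · simp [h]
    · rw [Real.sqrt_mul (hq i hi) (r i), ← mul_assoc, Real.mul_self_sqrt (hq i hi)]
  calc ∑ i ∈ t, q i * Real.sqrt (r i) = ∑ i ∈ t, Real.sqrt (q i) * Real.sqrt (q i * r i) :=
        Finset.sum_congr rfl key
    _ ≤ Real.sqrt (∑ i ∈ t, Real.sqrt (q i) ^ 2) * Real.sqrt (∑ i ∈ t, Real.sqrt (q i * r i) ^ 2) :=
        Real.sum_mul_le_sqrt_mul_sqrt t _ _
    _ = Real.sqrt (∑ i ∈ t, q i) * Real.sqrt (∑ i ∈ t, q i * r i) := by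
        congr 2
        · exact Finset.sum_congr rfl fun i hi => Real.sq_sqrt (hq i hi)
        · refine Finset.sum_congr rfl fun i hi => ?_
          by_cases h : q i = 0
          · simp [h]
          · exact Real.sq_sqrt (mul_nonneg (hq i hi) (hr i hi h))

end Pinsker

section Mass

variable {S A : Type*} [Fintype S] [Fintype A]

lemma hmmWeight_nonneg (M : HMM S A) (T : ℕ) (ω) : 0 ≤ hmmWeight M T ω :=
  mul_nonneg (mul_nonneg (M.init_nonneg _)
    (Finset.prod_nonneg fun _ _ => M.trans_nonneg _ _))
    (Finset.prod_nonneg fun _ _ => M.emit_nonneg _ _)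

lemma path_sum (trans : S → S → ℝ) (htrans : ∀ s, ∑ s', trans s s' = 1) :
    ∀ (m : ℕ) (s0 : S),
      ∑ h : Fin (m + 1) → S,
        (if h 0 = s0 then ∏ i : Fin m, trans (h i.castSucc) (h i.succ) else 0) = 1 := by
  intro m
  induction m with
  | zero =>
    intro s0
    rw [Fintype.sum_equiv (Equiv.funUnique (Fin 1) S)
      _ (fun s => if s = s0 then 1 else 0) (fun h => by simp [Equiv.funUnique])]
    simp
  | succ m ih =>
    intro s0
    have key : ∀ (a : S) (g : Fin (m + 1) → S),
        (∏ i : Fin (m + 1), trans ((Fin.cons a g : Fin (m + 2) → S) i.castSucc)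
          ((Fin.cons a g : Fin (m + 2) → S) i.succ))
        = trans a (g 0) * ∏ i : Fin m, trans (g i.castSucc) (g i.succ) := by
      intro a g
      rw [Fin.prod_univ_succ]
      simp only [Fin.castSucc_zero, Fin.cons_zero, Fin.cons_succ]
      congr 1
    rw [← Equiv.sum_comp (Fin.consEquiv fun _ : Fin (m + 2) => S)
      (fun h => if h 0 = s0 then ∏ i : Fin (m + 1), trans (h i.castSucc) (h i.succ) else 0)]
    rw [Fintype.sum_prod_type]
    have inner : ∀ a : S,
        (∑ g : Fin (m + 1) → S,
          if a = s0 then trans a (g 0) * ∏ i : Fin m, trans (g i.castSucc) (g i.succ) else 0)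
        = if a = s0 then 1 else 0 := by
      intro a
      by_cases ha : a = s0
      · subst ha
        simp only [if_pos rfl]
        calc ∑ g : Fin (m + 1) → S, trans a (g 0) * ∏ i : Fin m, trans (g i.castSucc) (g i.succ)
            = ∑ g : Fin (m + 1) → S, ∑ s1 : S,
                if g 0 = s1 then trans a s1 * ∏ i : Fin m, trans (g i.castSucc) (g i.succ)
                else 0 := by
              refine Finset.sum_congr rfl fun g _ => ?_
              rw [Finset.sum_ite_eq Finset.univ (g 0)
                (fun s1 => trans a s1 * ∏ i : Fin m, trans (g i.castSucc) (g i.succ))]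
              simp
          _ = ∑ s1 : S, ∑ g : Fin (m + 1) → S,
                (trans a s1 * if g 0 = s1 then ∏ i : Fin m, trans (g i.castSucc) (g i.succ)
                else 0) := by
              rw [Finset.sum_comm]
              refine Finset.sum_congr rfl fun s1 _ => Finset.sum_congr rfl fun g _ => ?_
              by_cases h : g 0 = s1 <;> simp [h]
          _ = ∑ s1 : S, trans a s1 := by
              refine Finset.sum_congr rfl fun s1 _ => ?_
              rw [← Finset.mul_sum, ih s1, mul_one]
          _ = 1 := htrans a
      · simp [ha]
    calc (∑ a : S, ∑ g : Fin (m + 1) → S,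
          if (Fin.consEquiv fun _ : Fin (m + 2) => S) (a, g) 0 = s0
          then ∏ i : Fin (m + 1), trans ((Fin.consEquiv fun _ : Fin (m + 2) => S) (a, g) i.castSucc)
            ((Fin.consEquiv fun _ : Fin (m + 2) => S) (a, g) i.succ) else 0)
        = ∑ a : S, ∑ g : Fin (m + 1) → S,
            (if a = s0 then trans a (g 0) * ∏ i : Fin m, trans (g i.castSucc) (g i.succ)
             else 0) := by
          refine Finset.sum_congr rfl fun a _ => Finset.sum_congr rfl fun g _ => ?_
          have e1 : (Fin.consEquiv fun _ : Fin (m + 2) => S) (a, g) = Fin.cons a g := rfl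
          rw [e1, key a g, Fin.cons_zero]
      _ = ∑ a : S, if a = s0 then 1 else 0 := Finset.sum_congr rfl fun a _ => inner a
      _ = 1 := by simp

lemma emit_mass (M : HMM S A) (m : ℕ) (h : Fin m → S) :
    ∑ x : Fin m → A, ∏ i, M.emit (h i) (x i) = 1 := by
  have e := Finset.prod_univ_sum (fun _ : Fin m => (Finset.univ : Finset A))
    (fun i a => M.emit (h i) a)
  rw [Fintype.piFinset_univ] at e
  rw [← e]
  simp [M.emit_sum]

lemma pr_hid0 (M : HMM S A) (T : ℕ) (s0 : S) :
    pr (hmmWeight M T) (fun ω => hid T 0 ω = s0) = M.init s0 := by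
  have hzero : (⟨0 % (T + 1), Nat.mod_lt _ (Nat.succ_pos T)⟩ : Fin (T + 1)) = 0 := by
    ext; simp
  unfold pr hid
  rw [Fintype.sum_prod_type]
  calc (∑ h : Fin (T + 1) → S, ∑ x : Fin (T + 1) → A,
        if h ⟨0 % (T + 1), Nat.mod_lt _ (Nat.succ_pos T)⟩ = s0 then hmmWeight M T (h, x) else 0)
      = ∑ h : Fin (T + 1) → S,
          (if h 0 = s0
           then M.init (h 0) * ∏ i : Fin T, M.trans (h i.castSucc) (h i.succ) else 0) := by
        refine Finset.sum_congr rfl fun h _ => ?_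
        rw [hzero]
        by_cases hh : h 0 = s0
        · simp only [if_pos hh]
          unfold hmmWeight
          dsimp only
          rw [← Finset.mul_sum, emit_mass M (T + 1) h, mul_one]
        · simp [hh]
    _ = M.init s0 * ∑ h : Fin (T + 1) → S,
          (if h 0 = s0 then ∏ i : Fin T, M.trans (h i.castSucc) (h i.succ) else 0) := by
        rw [Finset.mul_sum]
        refine Finset.sum_congr rfl fun h _ => ?_
        by_cases hh : h 0 = s0
        · rw [if_pos hh, if_pos hh, hh]
        · simp [hh]
    _ = M.init s0 := by rw [path_sum M.trans M.trans_sum T s0, mul_one]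

lemma total_mass (M : HMM S A) (T : ℕ) : ∑ ω, hmmWeight M T ω = 1 := by
  have e1 : ∑ ω, hmmWeight M T ω = pr (hmmWeight M T) (fun _ => True) := by
    unfold pr; simp
  rw [e1, ← sum_pr_eq (hmmWeight M T) (hid T 0) (fun _ => True)]
  calc ∑ s0 : S, pr (hmmWeight M T) (fun ω => hid T 0 ω = s0 ∧ True)
      = ∑ s0 : S, pr (hmmWeight M T) (fun ω => hid T 0 ω = s0) :=
        Finset.sum_congr rfl fun s0 _ => pr_congr (fun ω => by simp)
    _ = ∑ s0 : S, M.init s0 := Finset.sum_congr rfl fun s0 _ => pr_hid0 M T s0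
    _ = 1 := M.init_sum

end Mass

section StepB

variable {Ω B A : Type*} [Fintype Ω] [Fintype B] [Fintype A]

lemma pr_q_eq (p : Ω → ℝ) (E0 E : Ω → Prop) :
    pr (fun ω => if E0 ω then p ω else 0) E = pr p (fun ω => E ω ∧ E0 ω) := by
  unfold pr
  refine Finset.sum_congr rfl fun ω _ => ?_
  by_cases h1 : E ω <;> by_cases h2 : E0 ω <;> simp [h1, h2]

lemma stepB (p : Ω → ℝ) (hp : ∀ ω, 0 ≤ p ω) (E0 : Ω → Prop) (Y : Ω → B) (X : Ω → A) :
    ∑ ω, (if E0 ω then p ω else 0) *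
      ∑ a, condDist p X (fun ω' => Y ω' = Y ω ∧ E0 ω') a *
        Real.log (condDist p X (fun ω' => Y ω' = Y ω ∧ E0 ω') a /
          condDist p X (fun ω' => Y ω' = Y ω) a)
    = ∑ ω, (if E0 ω then p ω else 0) *
        Real.log (condDist p X (fun ω' => Y ω' = Y ω ∧ E0 ω') (X ω) /
          condDist p X (fun ω' => Y ω' = Y ω) (X ω)) := by
  set q : Ω → ℝ := fun ω => if E0 ω then p ω else 0 with hqdef
  have hqn : ∀ ω, 0 ≤ q ω := fun ω => by
    rw [hqdef]; dsimp only; split_ifs; exacts [hp ω, le_rfl]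
  set cOPT : B → A → ℝ := fun u => condDist p X (fun ω' => Y ω' = u ∧ E0 ω') with hcOPT
  set cM : B → A → ℝ := fun u => condDist p X (fun ω' => Y ω' = u) with hcM
  have collapse : ∀ (ω : Ω) (t : B → A → ℝ),
      (∑ u : B, ∑ b : A, if Y ω = u ∧ X ω = b then t u b else 0) = t (Y ω) (X ω) := by
    intro ω t
    have e1 : ∀ u : B, (∑ b : A, if Y ω = u ∧ X ω = b then t u b else 0)
        = if Y ω = u then t u (X ω) else 0 := by
      intro u
      by_cases h : Y ω = u
      · simp only [h, true_and]
        rw [Finset.sum_ite_eq Finset.univ (X ω) (fun b => t u b)]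
        simp
      · simp [h]
    rw [Finset.sum_congr rfl fun u _ => e1 u,
      Finset.sum_ite_eq Finset.univ (Y ω) (fun u => t u (X ω))]
    simp
  have expand : ∀ G : B → A → ℝ,
      (∑ u : B, ∑ b : A, pr q (fun ω => Y ω = u ∧ X ω = b) * G u b)
      = ∑ ω, q ω * G (Y ω) (X ω) := by
    intro G
    calc ∑ u : B, ∑ b : A, pr q (fun ω => Y ω = u ∧ X ω = b) * G u b
        = ∑ u : B, ∑ b : A, ∑ ω, (if Y ω = u ∧ X ω = b then q ω * G u b else 0) := by
          refine Finset.sum_congr rfl fun u _ => Finset.sum_congr rfl fun b _ => ?_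
          rw [pr, Finset.sum_mul]
          exact Finset.sum_congr rfl fun ω _ => by by_cases h : Y ω = u ∧ X ω = b <;> simp [h]
      _ = ∑ ω, ∑ u : B, ∑ b : A, (if Y ω = u ∧ X ω = b then q ω * G u b else 0) := by
          rw [show (∑ u : B, ∑ b : A, ∑ ω, (if Y ω = u ∧ X ω = b then q ω * G u b else 0))
              = ∑ u : B, ∑ ω, ∑ b : A, (if Y ω = u ∧ X ω = b then q ω * G u b else 0) from
            Finset.sum_congr rfl fun u _ => Finset.sum_comm, Finset.sum_comm]
      _ = ∑ ω, q ω * G (Y ω) (X ω) :=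
          Finset.sum_congr rfl fun ω _ => collapse ω (fun u b => q ω * G u b)
  have peru : ∀ u : B,
      (∑ b : A, pr q (fun ω => Y ω = u ∧ X ω = b) * ∑ a, cOPT u a * Real.log (cOPT u a / cM u a))
      = ∑ b : A, pr q (fun ω => Y ω = u ∧ X ω = b) * Real.log (cOPT u b / cM u b) := by
    intro u
    have hnum : ∀ b : A, pr q (fun ω => Y ω = u ∧ X ω = b)
        = pr p (fun ω => X ω = b ∧ (Y ω = u ∧ E0 ω)) := by
      intro b
      rw [pr_q_eq]
      exact pr_congr fun ω => by tauto
    have hden : pr q (fun ω => Y ω = u) = pr p (fun ω => Y ω = u ∧ E0 ω) := pr_q_eq p E0 _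
    have hsum : ∑ b : A, pr q (fun ω => Y ω = u ∧ X ω = b) = pr q (fun ω => Y ω = u) := by
      rw [← sum_pr_eq q X (fun ω => Y ω = u)]
      exact Finset.sum_congr rfl fun b _ => pr_congr fun ω => by tauto
    by_cases hz : pr q (fun ω => Y ω = u) = 0
    · have hzero : ∀ b : A, pr q (fun ω => Y ω = u ∧ X ω = b) = 0 := by
        intro b
        have h1 : pr q (fun ω => Y ω = u ∧ X ω = b) ≤ pr q (fun ω => Y ω = u) :=
          pr_mono hqn fun ω h => h.1
        have h2 : 0 ≤ pr q (fun ω => Y ω = u ∧ X ω = b) := pr_nonneg hqn _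
        linarith [hz ▸ h1]
      refine Finset.sum_congr rfl fun b _ => ?_
      rw [hzero b, zero_mul, zero_mul]
    · have hkey : ∀ b : A, pr q (fun ω => Y ω = u ∧ X ω = b)
          = pr q (fun ω => Y ω = u) * cOPT u b := by
        intro b
        rw [hcOPT]
        dsimp only
        unfold condDist
        rw [← hnum b, ← hden, mul_comm, div_mul_cancel₀ _ hz]
      calc ∑ b : A, pr q (fun ω => Y ω = u ∧ X ω = b) * ∑ a, cOPT u a * Real.log (cOPT u a / cM u a)
          = (∑ b : A, pr q (fun ω => Y ω = u ∧ X ω = b)) *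
              ∑ a, cOPT u a * Real.log (cOPT u a / cM u a) := (Finset.sum_mul _ _ _).symm
        _ = pr q (fun ω => Y ω = u) * ∑ a, cOPT u a * Real.log (cOPT u a / cM u a) := by
            rw [hsum]
        _ = ∑ b : A, pr q (fun ω => Y ω = u) * (cOPT u b * Real.log (cOPT u b / cM u b)) :=
            Finset.mul_sum _ _ _
        _ = ∑ b : A, pr q (fun ω => Y ω = u ∧ X ω = b) * Real.log (cOPT u b / cM u b) := by
            refine Finset.sum_congr rfl fun b _ => ?_
            rw [hkey b]
            ring
  have L : ∑ ω, q ω * ∑ a, cOPT (Y ω) a * Real.log (cOPT (Y ω) a / cM (Y ω) a)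
      = ∑ ω, q ω * Real.log (cOPT (Y ω) (X ω) / cM (Y ω) (X ω)) := by
    rw [← expand (fun u _ => ∑ a, cOPT u a * Real.log (cOPT u a / cM u a)),
        ← expand (fun u b => Real.log (cOPT u b / cM u b))]
    exact Finset.sum_congr rfl fun u _ => peru u
  exact L

end StepB

section Core

lemma main_core {Ω A : Type*} [Fintype Ω] [Fintype A]
    (p : Ω → ℝ) (hpnn : ∀ ω, 0 ≤ p ω) (htot : ∑ ω, p ω = 1)
    (E0 : Ω → Prop) (ℓ : ℕ) (X : ℕ → Ω → A)
    (hWpos : 0 < pr p E0) (C : ℝ) (hC : -Real.log (pr p E0) ≤ C) :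
    (∑ ω, (if E0 ω then p ω else 0) *
        ∑ s ∈ Finset.range ℓ,
          l1Dist (condDist p (X s) (fun ω' => (∀ k, k < s → X k ω' = X k ω) ∧ E0 ω'))
                 (condDist p (X s) (fun ω' => ∀ k, k < s → X k ω' = X k ω)))
      ≤ 2 * pr p E0 * Real.sqrt ((ℓ : ℝ) * C) := by
  classical
  have hq : ∀ ω : Ω, 0 ≤ (if E0 ω then p ω else 0) := fun ω => by
    split_ifs with h
    exacts [hpnn ω, le_rfl]
  have hsupp : ∀ ω : Ω, (if E0 ω then p ω else 0) ≠ 0 → 0 < p ω ∧ E0 ω := by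
    intro ω h
    by_cases hE : E0 ω
    · rw [if_pos hE] at h
      exact ⟨lt_of_le_of_ne (hpnn ω) (Ne.symm h), hE⟩
    · rw [if_neg hE] at h
      exact absurd rfl h
  have hW1 : pr p E0 ≤ 1 := by
    have h1 : pr p E0 ≤ pr p (fun _ => True) := pr_mono hpnn fun ω _ => trivial
    have h2 : pr p (fun _ => True) = 1 := by
      unfold pr; simpa using htot
    linarith
  have hC0 : 0 ≤ C := by
    have hlog : Real.log (pr p E0) ≤ 0 := Real.log_nonpos hWpos.le hW1
    linarith
  have hQpos : ∀ (t : ℕ) (ω : Ω), 0 < p ω → E0 ω →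
      0 < pr p (fun ω' => (∀ k, k < t → X k ω' = X k ω) ∧ E0 ω') := by
    intro t ω h1 h2
    exact lt_of_lt_of_le h1 (single_le_pr hpnn ⟨fun k _ => rfl, h2⟩)
  have hPpos : ∀ (t : ℕ) (ω : Ω), 0 < p ω →
      0 < pr p (fun ω' => ∀ k, k < t → X k ω' = X k ω) := by
    intro t ω h1
    exact lt_of_lt_of_le h1 (single_le_pr hpnn fun k _ => rfl)
  have hPL : ∀ (s : ℕ) (ω : Ω), 0 < p ω → E0 ω →
      0 ≤ (∑ a, condDist p (X s) (fun ω' => (∀ k, k < s → X k ω' = X k ω) ∧ E0 ω') a *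
          Real.log (condDist p (X s) (fun ω' => (∀ k, k < s → X k ω' = X k ω) ∧ E0 ω') a /
            condDist p (X s) (fun ω' => ∀ k, k < s → X k ω' = X k ω) a)) ∧
      l1Dist (condDist p (X s) (fun ω' => (∀ k, k < s → X k ω' = X k ω) ∧ E0 ω'))
          (condDist p (X s) (fun ω' => ∀ k, k < s → X k ω' = X k ω)) ≤
        2 * Real.sqrt (∑ a, condDist p (X s) (fun ω' => (∀ k, k < s → X k ω' = X k ω) ∧ E0 ω') a *
          Real.log (condDist p (X s) (fun ω' => (∀ k, k < s → X k ω' = X k ω) ∧ E0 ω') a /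
            condDist p (X s) (fun ω' => ∀ k, k < s → X k ω' = X k ω) a)) := by
    intro s ω h1 h2
    have hQ := hQpos s ω h1 h2
    have hP := hPpos s ω h1
    have hac : ∀ a, condDist p (X s) (fun ω' => ∀ k, k < s → X k ω' = X k ω) a = 0 →
        condDist p (X s) (fun ω' => (∀ k, k < s → X k ω' = X k ω) ∧ E0 ω') a = 0 := by
      intro a ha
      unfold condDist at ha ⊢
      rcases div_eq_zero_iff.1 ha with h | h
      · have hle : pr p (fun ω' => X s ω' = a ∧ ((∀ k, k < s → X k ω' = X k ω) ∧ E0 ω'))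
            ≤ pr p (fun ω' => X s ω' = a ∧ ∀ k, k < s → X k ω' = X k ω) :=
          pr_mono hpnn fun ω' hh => ⟨hh.1, hh.2.1⟩
        have hge : 0 ≤ pr p (fun ω' => X s ω' = a ∧ ((∀ k, k < s → X k ω' = X k ω) ∧ E0 ω')) :=
          pr_nonneg hpnn _
        have hz : pr p (fun ω' => X s ω' = a ∧ ((∀ k, k < s → X k ω' = X k ω) ∧ E0 ω')) = 0 :=
          le_antisymm (h ▸ hle) hge
        rw [hz, zero_div]
      · exact absurd h (ne_of_gt hP)
    have hres := pinsker_lite _ _ (condDist_nonneg hpnn _ _) (condDist_nonneg hpnn _ _)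
      (condDist_sum_one _ _ (ne_of_gt hQ)) (condDist_sum_one _ _ (ne_of_gt hP)) hac
    exact ⟨hres.1, hres.2⟩
  have htel : ∀ ω : Ω, 0 < p ω → E0 ω →
      (∑ s ∈ Finset.range ℓ,
        Real.log (condDist p (X s) (fun ω' => (∀ k, k < s → X k ω' = X k ω) ∧ E0 ω') (X s ω) /
          condDist p (X s) (fun ω' => ∀ k, k < s → X k ω' = X k ω) (X s ω))) ≤ C := by
    intro ω h1 h2
    have hstep : ∀ s : ℕ,
        Real.log (condDist p (X s) (fun ω' => (∀ k, k < s → X k ω' = X k ω) ∧ E0 ω') (X s ω) /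
          condDist p (X s) (fun ω' => ∀ k, k < s → X k ω' = X k ω) (X s ω))
        = ((Real.log (pr p (fun ω' => (∀ k, k < s + 1 → X k ω' = X k ω) ∧ E0 ω'))
            - Real.log (pr p (fun ω' => (∀ k, k < s → X k ω' = X k ω) ∧ E0 ω')))
          - (Real.log (pr p (fun ω' => ∀ k, k < s + 1 → X k ω' = X k ω))
            - Real.log (pr p (fun ω' => ∀ k, k < s → X k ω' = X k ω)))) := by
      intro s
      have hiff1 : ∀ ω' : Ω,
          (X s ω' = X s ω ∧ ((∀ k, k < s → X k ω' = X k ω) ∧ E0 ω'))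
          ↔ ((∀ k, k < s + 1 → X k ω' = X k ω) ∧ E0 ω') := by
        intro ω'
        constructor
        · rintro ⟨hx, hm, hE⟩
          refine ⟨fun k hk => ?_, hE⟩
          rcases Nat.lt_succ_iff_lt_or_eq.1 hk with h | h
          · exact hm k h
          · rw [h]; exact hx
        · rintro ⟨hm, hE⟩
          exact ⟨hm s (Nat.lt_succ_self s), ⟨fun k hk => hm k (Nat.lt_succ_of_lt hk), hE⟩⟩
      have hiff2 : ∀ ω' : Ω,
          (X s ω' = X s ω ∧ ∀ k, k < s → X k ω' = X k ω)
          ↔ (∀ k, k < s + 1 → X k ω' = X k ω) := by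
        intro ω'
        constructor
        · rintro ⟨hx, hm⟩ k hk
          rcases Nat.lt_succ_iff_lt_or_eq.1 hk with h | h
          · exact hm k h
          · rw [h]; exact hx
        · intro hm
          exact ⟨hm s (Nat.lt_succ_self s), fun k hk => hm k (Nat.lt_succ_of_lt hk)⟩
      unfold condDist
      rw [pr_congr hiff1, pr_congr hiff2]
      rw [Real.log_div (ne_of_gt (div_pos (hQpos (s+1) ω h1 h2) (hQpos s ω h1 h2)))
            (ne_of_gt (div_pos (hPpos (s+1) ω h1) (hPpos s ω h1))),
          Real.log_div (ne_of_gt (hQpos (s+1) ω h1 h2)) (ne_of_gt (hQpos s ω h1 h2)),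
          Real.log_div (ne_of_gt (hPpos (s+1) ω h1)) (ne_of_gt (hPpos s ω h1))]
    rw [Finset.sum_congr rfl fun s _ => hstep s, Finset.sum_sub_distrib,
      Finset.sum_range_sub
        (fun t => Real.log (pr p (fun ω' => (∀ k, k < t → X k ω' = X k ω) ∧ E0 ω'))),
      Finset.sum_range_sub (fun t => Real.log (pr p (fun ω' => ∀ k, k < t → X k ω' = X k ω)))]
    have h0Q : pr p (fun ω' => (∀ k, k < 0 → X k ω' = X k ω) ∧ E0 ω') = pr p E0 :=
      pr_congr fun ω' => by simp
    have h0P : pr p (fun ω' => ∀ k, k < 0 → X k ω' = X k ω) = 1 := by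
      have htriv : ∀ ω' : Ω, (∀ k, k < 0 → X k ω' = X k ω) :=
        fun ω' k hk => absurd hk (Nat.not_lt_zero k)
      rw [pr_congr (E := fun ω' => ∀ k, k < 0 → X k ω' = X k ω) (F := fun _ => True)
        (fun ω' => iff_of_true (htriv ω') trivial)]
      unfold pr
      simpa using htot
    have hQP : Real.log (pr p (fun ω' => (∀ k, k < ℓ → X k ω' = X k ω) ∧ E0 ω'))
        ≤ Real.log (pr p (fun ω' => ∀ k, k < ℓ → X k ω' = X k ω)) :=
      Real.log_le_log (hQpos ℓ ω h1 h2) (pr_mono hpnn fun ω' h => h.1)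
    rw [h0Q, h0P, Real.log_one]
    linarith
  have hKsum : ∀ s : ℕ,
      (∑ ω, (if E0 ω then p ω else 0) *
        ∑ a, condDist p (X s) (fun ω' => (∀ k, k < s → X k ω' = X k ω) ∧ E0 ω') a *
          Real.log (condDist p (X s) (fun ω' => (∀ k, k < s → X k ω' = X k ω) ∧ E0 ω') a /
            condDist p (X s) (fun ω' => ∀ k, k < s → X k ω' = X k ω) a))
      = ∑ ω, (if E0 ω then p ω else 0) *
          Real.log (condDist p (X s) (fun ω' => (∀ k, k < s → X k ω' = X k ω) ∧ E0 ω') (X s ω) /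
            condDist p (X s) (fun ω' => ∀ k, k < s → X k ω' = X k ω) (X s ω)) := by
    intro s
    have hc1 : ∀ ω : Ω,
        condDist p (X s) (fun ω' => (∀ k, k < s → X k ω' = X k ω) ∧ E0 ω')
        = condDist p (X s)
            (fun ω' => (fun j : Fin s => X (j : ℕ) ω') = (fun j : Fin s => X (j : ℕ) ω) ∧ E0 ω') := by
      intro ω
      refine condDist_congr _ fun ω' => and_congr_left' ?_
      rw [funext_iff]
      exact ⟨fun h j => h j j.isLt, fun h k hk => h ⟨k, hk⟩⟩
    have hc2 : ∀ ω : Ω,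
        condDist p (X s) (fun ω' => ∀ k, k < s → X k ω' = X k ω)
        = condDist p (X s)
            (fun ω' => (fun j : Fin s => X (j : ℕ) ω') = (fun j : Fin s => X (j : ℕ) ω)) := by
      intro ω
      refine condDist_congr _ fun ω' => ?_
      rw [funext_iff]
      exact ⟨fun h j => h j j.isLt, fun h k hk => h ⟨k, hk⟩⟩
    calc (∑ ω, (if E0 ω then p ω else 0) *
          ∑ a, condDist p (X s) (fun ω' => (∀ k, k < s → X k ω' = X k ω) ∧ E0 ω') a *
            Real.log (condDist p (X s) (fun ω' => (∀ k, k < s → X k ω' = X k ω) ∧ E0 ω') a /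
              condDist p (X s) (fun ω' => ∀ k, k < s → X k ω' = X k ω) a))
        = ∑ ω, (if E0 ω then p ω else 0) *
            ∑ a, condDist p (X s)
                (fun ω' => (fun j : Fin s => X (j : ℕ) ω') = (fun j : Fin s => X (j : ℕ) ω)
                  ∧ E0 ω') a *
              Real.log (condDist p (X s)
                  (fun ω' => (fun j : Fin s => X (j : ℕ) ω') = (fun j : Fin s => X (j : ℕ) ω)
                    ∧ E0 ω') a /
                condDist p (X s)
                  (fun ω' => (fun j : Fin s => X (j : ℕ) ω') = (fun j : Fin s => X (j : ℕ) ω)) a) := by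
          refine Finset.sum_congr rfl fun ω _ => ?_
          rw [hc1 ω, hc2 ω]
      _ = ∑ ω, (if E0 ω then p ω else 0) *
            Real.log (condDist p (X s)
                (fun ω' => (fun j : Fin s => X (j : ℕ) ω') = (fun j : Fin s => X (j : ℕ) ω)
                  ∧ E0 ω') (X s ω) /
              condDist p (X s)
                (fun ω' => (fun j : Fin s => X (j : ℕ) ω') = (fun j : Fin s => X (j : ℕ) ω))
                (X s ω)) :=
          stepB p hpnn E0 (fun ω => fun j : Fin s => X (j : ℕ) ω) (X s)
      _ = ∑ ω, (if E0 ω then p ω else 0) *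
            Real.log (condDist p (X s) (fun ω' => (∀ k, k < s → X k ω' = X k ω) ∧ E0 ω') (X s ω) /
              condDist p (X s) (fun ω' => ∀ k, k < s → X k ω' = X k ω) (X s ω)) := by
          refine Finset.sum_congr rfl fun ω _ => ?_
          rw [hc1 ω, hc2 ω]
  have hKtot :
      (∑ s ∈ Finset.range ℓ, ∑ ω, (if E0 ω then p ω else 0) *
        ∑ a, condDist p (X s) (fun ω' => (∀ k, k < s → X k ω' = X k ω) ∧ E0 ω') a *
          Real.log (condDist p (X s) (fun ω' => (∀ k, k < s → X k ω' = X k ω) ∧ E0 ω') a /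
            condDist p (X s) (fun ω' => ∀ k, k < s → X k ω' = X k ω) a))
      ≤ pr p E0 * C := by
    calc (∑ s ∈ Finset.range ℓ, ∑ ω, (if E0 ω then p ω else 0) *
          ∑ a, condDist p (X s) (fun ω' => (∀ k, k < s → X k ω' = X k ω) ∧ E0 ω') a *
            Real.log (condDist p (X s) (fun ω' => (∀ k, k < s → X k ω' = X k ω) ∧ E0 ω') a /
              condDist p (X s) (fun ω' => ∀ k, k < s → X k ω' = X k ω) a))
        = ∑ s ∈ Finset.range ℓ, ∑ ω, (if E0 ω then p ω else 0) *
            Real.log (condDist p (X s) (fun ω' => (∀ k, k < s → X k ω' = X k ω) ∧ E0 ω') (X s ω) /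
              condDist p (X s) (fun ω' => ∀ k, k < s → X k ω' = X k ω) (X s ω)) :=
          Finset.sum_congr rfl fun s _ => hKsum s
      _ = ∑ ω, ∑ s ∈ Finset.range ℓ, (if E0 ω then p ω else 0) *
            Real.log (condDist p (X s) (fun ω' => (∀ k, k < s → X k ω' = X k ω) ∧ E0 ω') (X s ω) /
              condDist p (X s) (fun ω' => ∀ k, k < s → X k ω' = X k ω) (X s ω)) :=
          Finset.sum_comm
      _ = ∑ ω, (if E0 ω then p ω else 0) *
            ∑ s ∈ Finset.range ℓ,
              Real.log (condDist p (X s) (fun ω' => (∀ k, k < s → X k ω' = X k ω) ∧ E0 ω') (X s ω) /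
                condDist p (X s) (fun ω' => ∀ k, k < s → X k ω' = X k ω) (X s ω)) :=
          Finset.sum_congr rfl fun ω _ => (Finset.mul_sum _ _ _).symm
      _ ≤ ∑ ω, (if E0 ω then p ω else 0) * C := by
          refine Finset.sum_le_sum fun ω _ => ?_
          by_cases h : (if E0 ω then p ω else 0) = 0
          · rw [h, zero_mul, zero_mul]
          · obtain ⟨h1, h2⟩ := hsupp ω h
            exact mul_le_mul_of_nonneg_left (htel ω h1 h2) (hq ω)
      _ = pr p E0 * C := by
          rw [← Finset.sum_mul]
          rfl
  calc (∑ ω, (if E0 ω then p ω else 0) *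
        ∑ s ∈ Finset.range ℓ,
          l1Dist (condDist p (X s) (fun ω' => (∀ k, k < s → X k ω' = X k ω) ∧ E0 ω'))
                 (condDist p (X s) (fun ω' => ∀ k, k < s → X k ω' = X k ω)))
      = ∑ s ∈ Finset.range ℓ, ∑ ω, (if E0 ω then p ω else 0) *
          l1Dist (condDist p (X s) (fun ω' => (∀ k, k < s → X k ω' = X k ω) ∧ E0 ω'))
                 (condDist p (X s) (fun ω' => ∀ k, k < s → X k ω' = X k ω)) := by
        rw [Finset.sum_comm]
        exact Finset.sum_congr rfl fun ω _ => Finset.mul_sum _ _ _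
    _ ≤ ∑ s ∈ Finset.range ℓ, ∑ ω, (if E0 ω then p ω else 0) *
          (2 * Real.sqrt (∑ a,
            condDist p (X s) (fun ω' => (∀ k, k < s → X k ω' = X k ω) ∧ E0 ω') a *
            Real.log (condDist p (X s) (fun ω' => (∀ k, k < s → X k ω' = X k ω) ∧ E0 ω') a /
              condDist p (X s) (fun ω' => ∀ k, k < s → X k ω' = X k ω) a))) := by
        refine Finset.sum_le_sum fun s _ => Finset.sum_le_sum fun ω _ => ?_
        by_cases h : (if E0 ω then p ω else 0) = 0
        · rw [h, zero_mul, zero_mul]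
        · obtain ⟨h1, h2⟩ := hsupp ω h
          exact mul_le_mul_of_nonneg_left (hPL s ω h1 h2).2 (hq ω)
    _ = ∑ s ∈ Finset.range ℓ, 2 * ∑ ω, (if E0 ω then p ω else 0) *
          Real.sqrt (∑ a,
            condDist p (X s) (fun ω' => (∀ k, k < s → X k ω' = X k ω) ∧ E0 ω') a *
            Real.log (condDist p (X s) (fun ω' => (∀ k, k < s → X k ω' = X k ω) ∧ E0 ω') a /
              condDist p (X s) (fun ω' => ∀ k, k < s → X k ω' = X k ω) a)) := by
        refine Finset.sum_congr rfl fun s _ => ?_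
        rw [Finset.mul_sum]
        exact Finset.sum_congr rfl fun ω _ => by ring
    _ ≤ ∑ s ∈ Finset.range ℓ, 2 * (Real.sqrt (pr p E0) * Real.sqrt
          (∑ ω, (if E0 ω then p ω else 0) *
            ∑ a, condDist p (X s) (fun ω' => (∀ k, k < s → X k ω' = X k ω) ∧ E0 ω') a *
              Real.log (condDist p (X s) (fun ω' => (∀ k, k < s → X k ω' = X k ω) ∧ E0 ω') a /
                condDist p (X s) (fun ω' => ∀ k, k < s → X k ω' = X k ω) a))) := by
        refine Finset.sum_le_sum fun s _ => mul_le_mul_of_nonneg_left ?_ (by norm_num)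
        exact sum_sqrt_le Finset.univ (fun ω => if E0 ω then p ω else 0) _
          (fun ω _ => hq ω) (fun ω _ h => (hPL s ω (hsupp ω h).1 (hsupp ω h).2).1)
    _ = 2 * Real.sqrt (pr p E0) * ∑ s ∈ Finset.range ℓ, Real.sqrt
          (∑ ω, (if E0 ω then p ω else 0) *
            ∑ a, condDist p (X s) (fun ω' => (∀ k, k < s → X k ω' = X k ω) ∧ E0 ω') a *
              Real.log (condDist p (X s) (fun ω' => (∀ k, k < s → X k ω' = X k ω) ∧ E0 ω') a /
                condDist p (X s) (fun ω' => ∀ k, k < s → X k ω' = X k ω) a)) := by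
        rw [Finset.mul_sum]
        exact Finset.sum_congr rfl fun s _ => by ring
    _ ≤ 2 * Real.sqrt (pr p E0) * (Real.sqrt (ℓ : ℝ) * Real.sqrt
          (∑ s ∈ Finset.range ℓ, ∑ ω, (if E0 ω then p ω else 0) *
            ∑ a, condDist p (X s) (fun ω' => (∀ k, k < s → X k ω' = X k ω) ∧ E0 ω') a *
              Real.log (condDist p (X s) (fun ω' => (∀ k, k < s → X k ω' = X k ω) ∧ E0 ω') a /
                condDist p (X s) (fun ω' => ∀ k, k < s → X k ω' = X k ω) a))) := by
        refine mul_le_mul_of_nonneg_left ?_ (by positivity)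
        have hcs := sum_sqrt_le (Finset.range ℓ) (fun _ => (1 : ℝ))
          (fun s => ∑ ω, (if E0 ω then p ω else 0) *
            ∑ a, condDist p (X s) (fun ω' => (∀ k, k < s → X k ω' = X k ω) ∧ E0 ω') a *
              Real.log (condDist p (X s) (fun ω' => (∀ k, k < s → X k ω' = X k ω) ∧ E0 ω') a /
                condDist p (X s) (fun ω' => ∀ k, k < s → X k ω' = X k ω) a))
          (fun s _ => zero_le_one)
          (fun s _ _ => Finset.sum_nonneg fun ω _ => by
            by_cases h : (if E0 ω then p ω else 0) = 0
            · rw [h, zero_mul]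
            · exact mul_nonneg (hq ω) (hPL s ω (hsupp ω h).1 (hsupp ω h).2).1)
        simpa using hcs
    _ ≤ 2 * Real.sqrt (pr p E0) * (Real.sqrt (ℓ : ℝ) * Real.sqrt (pr p E0 * C)) := by
        refine mul_le_mul_of_nonneg_left
          (mul_le_mul_of_nonneg_left (Real.sqrt_le_sqrt hKtot) (by positivity)) (by positivity)
    _ = 2 * pr p E0 * Real.sqrt ((ℓ : ℝ) * C) := by
        rw [Real.sqrt_mul hWpos.le C, Real.sqrt_mul (Nat.cast_nonneg ℓ) C]
        have hww : Real.sqrt (pr p E0) * Real.sqrt (pr p E0) = pr p E0 :=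
          Real.mul_self_sqrt hWpos.le
        linear_combination (2 * Real.sqrt (ℓ : ℝ) * Real.sqrt C) * hww

end Core

/-- Lemma 1: for an HMM with `n` hidden states and initial distribution `π`,
if the true initial hidden state `h₀` has `π(h₀) ≥ 1/n^c`, then with `ℓ = c·log n / ε²`, the
expected (over the outputs, conditioned on the initial state being `h₀`) total ℓ1 distance
between `OPT_s` (the conditional distribution of `x_s` given `x_0,…,x_{s-1}` and knowledge of
`h₀`) and `M_s` (the conditional distribution of `x_s` given only `x_0,…,x_{s-1}`), summed over
`s = 0, …, ℓ-1`, is at most `4εℓ`. -/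
theorem hmm_known_state_regret {S A : Type*} [Fintype S] [Fintype A] (M : HMM S A)
    (c ε : ℝ) (hc : 1 ≤ c)
    (hε1 : 1 / (Real.log (Fintype.card S)) ^ ((1 : ℝ) / 4) ≤ ε)
    (hε2 : 1 / (Fintype.card S : ℝ) < ε)
    (ℓ : ℕ) (hℓ : (ℓ : ℝ) = c * Real.log (Fintype.card S) / ε ^ 2)
    (h0 : S) (hπ : 1 / (Fintype.card S : ℝ) ^ c ≤ M.init h0) :
    (∑ ω, (if hid ℓ 0 ω = h0 then hmmWeight M ℓ ω else 0) *
        ∑ s ∈ Finset.range ℓ,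
          l1Dist
            (condDist (hmmWeight M ℓ) (obs ℓ s)
              (fun ω' => (∀ k, k < s → obs ℓ k ω' = obs ℓ k ω) ∧ hid ℓ 0 ω' = h0))
            (condDist (hmmWeight M ℓ) (obs ℓ s)
              (fun ω' => ∀ k, k < s → obs ℓ k ω' = obs ℓ k ω)))
      / pr (hmmWeight M ℓ) (fun ω => hid ℓ 0 ω = h0)
      ≤ 4 * ε * (ℓ : ℝ) := by

  classical
  have hSne : Nonempty S := ⟨h0⟩
  have hcard : 0 < Fintype.card S := Fintype.card_pos
  have hn1 : (1 : ℝ) ≤ (Fintype.card S : ℝ) := by exact_mod_cast hcard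
  have hnpos : (0 : ℝ) < (Fintype.card S : ℝ) := lt_of_lt_of_le one_pos hn1
  have hε0 : 0 < ε := lt_trans (div_pos one_pos hnpos) hε2
  have hrpow : (0 : ℝ) < (Fintype.card S : ℝ) ^ c := Real.rpow_pos_of_pos hnpos c
  have hW : pr (hmmWeight M ℓ) (fun ω => hid ℓ 0 ω = h0) = M.init h0 := pr_hid0 M ℓ h0
  have hWpos : 0 < pr (hmmWeight M ℓ) (fun ω => hid ℓ 0 ω = h0) := by
    rw [hW]
    exact lt_of_lt_of_le (div_pos one_pos hrpow) hπ
  have hlogn : 0 ≤ Real.log (Fintype.card S) := Real.log_nonneg hn1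
  have hC : -Real.log (pr (hmmWeight M ℓ) (fun ω => hid ℓ 0 ω = h0))
      ≤ c * Real.log (Fintype.card S) := by
    have h1 : Real.log (1 / (Fintype.card S : ℝ) ^ c)
        ≤ Real.log (pr (hmmWeight M ℓ) (fun ω => hid ℓ 0 ω = h0)) := by
      rw [hW]
      exact Real.log_le_log (div_pos one_pos hrpow) hπ
    have h2 : Real.log (1 / (Fintype.card S : ℝ) ^ c) = -(c * Real.log (Fintype.card S)) := by
      rw [one_div, Real.log_inv, Real.log_rpow hnpos]
    linarith
  have hmain := main_core (hmmWeight M ℓ) (hmmWeight_nonneg M ℓ) (total_mass M ℓ)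
    (fun ω => hid ℓ 0 ω = h0) ℓ (fun s => obs ℓ s) hWpos (c * Real.log (Fintype.card S)) hC
  have hclog : c * Real.log (Fintype.card S) = (ℓ : ℝ) * ε ^ 2 := by
    rw [hℓ]
    field_simp
  have hsqrt : Real.sqrt ((ℓ : ℝ) * (c * Real.log (Fintype.card S))) = (ℓ : ℝ) * ε := by
    rw [hclog, show (ℓ : ℝ) * ((ℓ : ℝ) * ε ^ 2) = ((ℓ : ℝ) * ε) ^ 2 by ring]
    exact Real.sqrt_sq (mul_nonneg (Nat.cast_nonneg ℓ) hε0.le)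
  rw [div_le_iff₀ hWpos]
  calc (∑ ω, (if hid ℓ 0 ω = h0 then hmmWeight M ℓ ω else 0) *
        ∑ s ∈ Finset.range ℓ,
          l1Dist
            (condDist (hmmWeight M ℓ) (obs ℓ s)
              (fun ω' => (∀ k, k < s → obs ℓ k ω' = obs ℓ k ω) ∧ hid ℓ 0 ω' = h0))
            (condDist (hmmWeight M ℓ) (obs ℓ s)
              (fun ω' => ∀ k, k < s → obs ℓ k ω' = obs ℓ k ω)))
      ≤ 2 * pr (hmmWeight M ℓ) (fun ω => hid ℓ 0 ω = h0) *
          Real.sqrt ((ℓ : ℝ) * (c * Real.log (Fintype.card S))) := hmain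
    _ = 2 * pr (hmmWeight M ℓ) (fun ω => hid ℓ 0 ω = h0) * ((ℓ : ℝ) * ε) := by rw [hsqrt]
    _ ≤ 4 * ε * (ℓ : ℝ) * pr (hmmWeight M ℓ) (fun ω => hid ℓ 0 ω = h0) := by
        nlinarith [hWpos, hε0, Nat.cast_nonneg (α := ℝ) ℓ,
          mul_nonneg (mul_nonneg hε0.le (Nat.cast_nonneg (α := ℝ) ℓ)) hWpos.le]
end

section
/- (Modified Pinsker's inequality.) For any two probability distributions μ and ν on a finite set X with ν(x) > 0 for all x, and any constant C with log C ≥ 8 (natural logarithm), define the C-truncated KL divergence D̃_C(μ‖ν) = Σ_{x∈X} μ(x) · log( min{ μ(x)/ν(x), C } ). Then D̃_C(μ‖ν) ≥ (1/2) · ‖μ − ν‖₁², where ‖μ−ν‖₁ = Σ_{x∈X} |μ(x)−ν(x)|. -/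
open Finset Real

private noncomputable def Gfun (t : ℝ) : ℝ :=
  Real.log t - 3 * (t - 1) * (t + 5) / (2 * (t + 2) ^ 2)

private noncomputable def Ffun (t : ℝ) : ℝ :=
  t * Real.log t - t + 1 - 3 * (t - 1) ^ 2 / (2 * (t + 2))

private lemma hasDerivAt_Gfun {t : ℝ} (ht : 0 < t) :
    HasDerivAt Gfun (t⁻¹ - 27 / (t + 2) ^ 3) t := by
  have ht2 : (0:ℝ) < t + 2 := by linarith
  have hden : (2 * (t + 2) ^ 2) ≠ 0 := by positivity
  have hlog : HasDerivAt Real.log t⁻¹ t := Real.hasDerivAt_log (ne_of_gt ht)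
  have h1 : HasDerivAt (fun s : ℝ => 3 * (s - 1)) 3 t := by
    simpa using ((hasDerivAt_id t).sub_const 1).const_mul (3:ℝ)
  have h2 : HasDerivAt (fun s : ℝ => s + 5) 1 t := (hasDerivAt_id t).add_const 5
  have hnum : HasDerivAt (fun s : ℝ => 3 * (s - 1) * (s + 5))
      (3 * (t + 5) + 3 * (t - 1) * 1) t := h1.mul h2
  have h3 : HasDerivAt (fun s : ℝ => (s + 2) ^ 2) (2 * (t + 2)) t := by
    simpa using ((hasDerivAt_id t).add_const 2).fun_pow 2
  have hdenD : HasDerivAt (fun s : ℝ => 2 * (s + 2) ^ 2) (2 * (2 * (t + 2))) t :=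
    h3.const_mul 2
  have hq := hnum.div hdenD hden
  have := hlog.sub hq
  refine this.congr_deriv ?_
  have hne : t ≠ 0 := ne_of_gt ht
  have hne2 : t + 2 ≠ 0 := ne_of_gt ht2
  field_simp
  ring

private lemma hasDerivAt_Ffun {t : ℝ} (ht : 0 < t) :
    HasDerivAt Ffun (Gfun t) t := by
  have ht2 : (0:ℝ) < t + 2 := by linarith
  have hden : (2 * (t + 2)) ≠ 0 := by positivity
  have hml : HasDerivAt (fun s : ℝ => s * Real.log s) (Real.log t + 1) t :=
    Real.hasDerivAt_mul_log (ne_of_gt ht)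
  have hnum : HasDerivAt (fun s : ℝ => 3 * (s - 1) ^ 2) (3 * (2 * (t - 1))) t := by
    simpa using (((hasDerivAt_id t).sub_const 1).pow 2).const_mul (3:ℝ)
  have hdenD : HasDerivAt (fun s : ℝ => 2 * (s + 2)) 2 t := by
    simpa using ((hasDerivAt_id t).add_const 2).const_mul (2:ℝ)
  have hq := hnum.div hdenD hden
  have h := ((hml.sub (hasDerivAt_id t)).add_const 1).sub hq
  refine h.congr_deriv ?_
  have hne2 : t + 2 ≠ 0 := ne_of_gt ht2
  unfold Gfun
  field_simp
  ring

private lemma Gfun_one : Gfun 1 = 0 := by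
  unfold Gfun; simp

private lemma Ffun_one : Ffun 1 = 0 := by
  unfold Ffun; simp

private lemma Gfun_mono : MonotoneOn Gfun (Set.Ioi 0) := by
  have hD : ∀ x ∈ interior (Set.Ioi (0:ℝ)), HasDerivAt Gfun (x⁻¹ - 27 / (x + 2) ^ 3) x := by
    rw [interior_Ioi]; exact fun x hx => hasDerivAt_Gfun hx
  apply monotoneOn_of_deriv_nonneg (convex_Ioi 0)
  · exact fun x hx => (hasDerivAt_Gfun hx).continuousAt.continuousWithinAt
  · exact fun x hx => ((hD x hx).differentiableAt).differentiableWithinAt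
  · intro x hx
    rw [(hD x hx).deriv]
    rw [interior_Ioi] at hx
    have hx0 : (0:ℝ) < x := hx
    have hx2 : (0:ℝ) < x + 2 := by linarith
    rw [sub_nonneg, div_le_iff₀ (by positivity), inv_mul_eq_div, le_div_iff₀ hx0]
    nlinarith [sq_nonneg (x - 1), hx0.le, sq_nonneg x]

private lemma Ffun_nonneg {t : ℝ} (ht : 0 < t) : 0 ≤ Ffun t := by
  rcases le_total 1 t with h1 | h1
  · have hmono : MonotoneOn Ffun (Set.Ici 1) := by
      apply monotoneOn_of_deriv_nonneg (convex_Ici 1)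
      · exact fun x hx => (hasDerivAt_Ffun (lt_of_lt_of_le one_pos hx)).continuousAt.continuousWithinAt
      · intro x hx
        rw [interior_Ici] at hx
        exact (hasDerivAt_Ffun (lt_trans one_pos hx)).differentiableAt.differentiableWithinAt
      · intro x hx
        rw [interior_Ici] at hx
        have hx0 : (0:ℝ) < x := lt_trans one_pos hx
        rw [(hasDerivAt_Ffun hx0).deriv]
        have := Gfun_mono (Set.mem_Ioi.2 one_pos) (Set.mem_Ioi.2 hx0) (le_of_lt hx)
        rw [Gfun_one] at this
        exact this
    have := hmono (Set.mem_Ici.2 le_rfl) (Set.mem_Ici.2 h1) h1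
    rwa [Ffun_one] at this
  · have hanti : AntitoneOn Ffun (Set.Ioc 0 1) := by
      apply antitoneOn_of_deriv_nonpos (convex_Ioc 0 1)
      · exact fun x hx => (hasDerivAt_Ffun hx.1).continuousAt.continuousWithinAt
      · intro x hx
        rw [interior_Ioc] at hx
        exact (hasDerivAt_Ffun hx.1).differentiableAt.differentiableWithinAt
      · intro x hx
        rw [interior_Ioc] at hx
        rw [(hasDerivAt_Ffun hx.1).deriv]
        have := Gfun_mono (Set.mem_Ioi.2 hx.1) (Set.mem_Ioi.2 one_pos) (le_of_lt hx.2)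
        rw [Gfun_one] at this
        exact this
    have := hanti (Set.mem_Ioc.2 ⟨ht, h1⟩) (Set.mem_Ioc.2 ⟨one_pos, le_rfl⟩) h1
    rwa [Ffun_one] at this

/-- scalar inequality: `3(t-1)²/(2(t+2)) ≤ t log t - t + 1` for `t > 0`. -/
private lemma key_scalar {t : ℝ} (ht : 0 < t) :
    3 * (t - 1) ^ 2 / (2 * (t + 2)) ≤ t * Real.log t - t + 1 := by
  have := Ffun_nonneg ht
  unfold Ffun at this
  linarith

/-- pointwise inequality with truncation. -/
private lemma key_pointwise {a b C : ℝ} (ha : 0 ≤ a) (hb : 0 < b) (hC : 8 ≤ Real.log C) :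
    3 * (a - b) ^ 2 / (2 * (a + 2 * b)) ≤ a * Real.log (min (a / b) C) + b - a := by
  rcases eq_or_lt_of_le ha with rfl | ha0
  · -- a = 0
    rw [zero_mul]
    have hb2 : (0:ℝ) < 2 * (0 + 2 * b) := by linarith
    rw [div_le_iff₀ hb2]
    nlinarith
  · rcases le_total (a / b) C with hmin | hmin
    · -- no truncation
      rw [min_eq_left hmin]
      have key := key_scalar (t := a / b) (by positivity)
      have hb' : b ≠ 0 := ne_of_gt hb
      have hmul := mul_le_mul_of_nonneg_left key hb.le
      calc 3 * (a - b) ^ 2 / (2 * (a + 2 * b))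
          = b * (3 * (a / b - 1) ^ 2 / (2 * (a / b + 2))) := by
            rw [eq_comm]
            have h2 : (0:ℝ) < a + 2*b := by linarith
            field_simp
        _ ≤ b * (a / b * Real.log (a / b) - a / b + 1) := hmul
        _ = a * Real.log (a / b) + b - a := by field_simp; ring
    · -- truncation active
      rw [min_eq_right hmin]
      have h8 : 8 * a ≤ a * Real.log C := by nlinarith
      have hpos : (0:ℝ) < 2 * (a + 2 * b) := by linarith
      rw [div_le_iff₀ hpos]
      nlinarith [ha0.le, hb.le, mul_nonneg ha0.le hb.le]

/-- Modified Pinsker's inequality: for probability distributions `μ, ν` on a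
finite set with `ν` strictly positive, and any `C` with `log C ≥ 8`, the `C`-truncated KL
divergence `D̃_C(μ‖ν) = Σ_x μ(x)·log(min{μ(x)/ν(x), C})` satisfies
`D̃_C(μ‖ν) ≥ (1/2)·‖μ−ν‖₁²`. -/
theorem modified_pinsker {X : Type*} [Fintype X]
    (μ ν : X → ℝ) (hμ0 : ∀ x, 0 ≤ μ x) (hμ1 : ∑ x, μ x = 1)
    (hν0 : ∀ x, 0 < ν x) (hν1 : ∑ x, ν x = 1)
    (C : ℝ) (hC : 8 ≤ Real.log C) :
    (1 / 2) * (∑ x, |μ x - ν x|) ^ 2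
      ≤ ∑ x, μ x * Real.log (min (μ x / ν x) C) := by
  set w : X → ℝ := fun x => (μ x + 2 * ν x) / 3 with hw
  have hw0 : ∀ x, 0 < w x := by
    intro x
    have := hμ0 x; have := hν0 x
    simp only [hw]; positivity
  have hsumw : ∑ x, w x = 1 := by
    simp only [hw]
    rw [← Finset.sum_div, Finset.sum_add_distrib, hμ1, ← Finset.mul_sum, hν1]
    norm_num
  -- Cauchy-Schwarz (Engel form)
  have cs : (∑ x, |μ x - ν x|) ^ 2 ≤ ∑ x, (μ x - ν x) ^ 2 / w x := by
    have h := Finset.sq_sum_div_le_sum_sq_div Finset.univ (fun x => |μ x - ν x|)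
      (g := w) (fun x _ => hw0 x)
    rw [hsumw, div_one] at h
    simpa [sq_abs] using h
  have step : ∀ x, (1/2) * ((μ x - ν x) ^ 2 / w x)
      ≤ μ x * Real.log (min (μ x / ν x) C) + ν x - μ x := by
    intro x
    have key := key_pointwise (hμ0 x) (hν0 x) hC
    have hwx := hw0 x
    have : (1/2) * ((μ x - ν x) ^ 2 / w x) = 3 * (μ x - ν x) ^ 2 / (2 * (μ x + 2 * ν x)) := by
      simp only [hw]
      rw [div_div_eq_mul_div]
      field_simp
    rw [this]
    exact key
  calc (1 / 2) * (∑ x, |μ x - ν x|) ^ 2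
      ≤ (1/2) * ∑ x, (μ x - ν x) ^ 2 / w x := by
        apply mul_le_mul_of_nonneg_left cs (by norm_num)
    _ = ∑ x, (1/2) * ((μ x - ν x) ^ 2 / w x) := by rw [Finset.mul_sum]
    _ ≤ ∑ x, (μ x * Real.log (min (μ x / ν x) C) + ν x - μ x) :=
        Finset.sum_le_sum (fun x _ => step x)
    _ = ∑ x, μ x * Real.log (min (μ x / ν x) C) := by
        rw [Finset.sum_sub_distrib, Finset.sum_add_distrib, hν1, hμ1]
        ring
end

section
/- For every pair of real numbers p, q with 0 ≤ q ≤ p ≤ 1 (and q < 1), the inequality 3p + (1−p)·log( (1−p)/(1−q) ) ≥ 2(p−q)² holds, where log is the natural logarithm and the convention 0·log 0 = 0 is used when p = 1. -/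
open Real

/-- for all `0 ≤ q ≤ p ≤ 1` with `q < 1`, we have
`3p + (1−p)·log((1−p)/(1−q)) ≥ 2(p−q)²` (natural log; for `p = 1` the second summand is `0`,
matching the convention `0·log 0 = 0`). -/
theorem three_p_inequality (p q : ℝ) (hq0 : 0 ≤ q) (hqp : q ≤ p) (hp1 : p ≤ 1) (hq1 : q < 1) :
    2 * (p - q) ^ 2 ≤ 3 * p + (1 - p) * Real.log ((1 - p) / (1 - q)) := by
  rcases eq_or_lt_of_le hp1 with hp | hp
  · subst hp
    simp
    nlinarith
  · have ha : 0 < 1 - p := by linarith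
    have hb : 0 < 1 - q := by linarith
    have h1 : Real.log ((1 - q) / (1 - p)) ≤ (1 - q) / (1 - p) - 1 :=
      Real.log_le_sub_one_of_pos (by positivity)
    have h2 : Real.log ((1 - p) / (1 - q)) = -Real.log ((1 - q) / (1 - p)) := by
      rw [← Real.log_inv]; congr 1; field_simp
    rw [h2]
    have h3 : (1 - p) - (1 - q) ≤ (1 - p) * (-Real.log ((1 - q) / (1 - p))) := by
      have hm := mul_le_mul_of_nonneg_left h1 ha.le
      have e : (1 - p) * ((1 - q) / (1 - p) - 1) = (1 - q) - (1 - p) := by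
        field_simp
      nlinarith
    nlinarith [sq_nonneg (p - q), mul_nonneg (sub_nonneg.2 hqp) (sub_nonneg.2 hp1),
      mul_nonneg (sub_nonneg.2 hqp) hq0]
end
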